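/- arXiv:2405.05592 — 2 statements merged into one kernel-verified Lean document; each statement's English description precedes it below -/
import Mathlib

section
/- (Multiplicative decomposition of the exponential sum.) With D := det(2M_F), let q = q₁q₂ where gcd(q₁, 2LD) = 1 and every prime factor of q₂ divides 2LD. Then for every c ∈ ℤ^{n+1}: S_{q,L,λ}(c) = S⁽¹⁾_{q,L,λ}(c) · S⁽²⁾_{q,L,λ}(c). -/
open scoped BigOperators
open Finset Filter Topology Matrix

noncomputable section

namespace Quad

/-- The integral quadratic form `x ↦ xᵀ M_F x` where `N = 2·M_F` is an integer
symmetric matrix with even diagonal, so that the value `(xᵀ N x)/2` is an integer. -/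
def Fint {m : ℕ} (N : Matrix (Fin m) (Fin m) ℤ) (x : Fin m → ℤ) : ℤ :=
  (∑ i, ∑ j, N i j * x i * x j) / 2

/-- The corresponding real quadratic form `x ↦ xᵀ M_F x`, `N = 2·M_F`. -/
def FR {m : ℕ} (N : Matrix (Fin m) (Fin m) ℤ) (x : Fin m → ℝ) : ℝ :=
  (∑ i, ∑ j, (N i j : ℝ) * x i * x j) / 2

/-- The real quadratic form attached to a real matrix. -/
def QFR {m : ℕ} (A : Matrix (Fin m) (Fin m) ℝ) (x : Fin m → ℝ) : ℝ :=
  ∑ i, ∑ j, A i j * x i * x j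

/-- The gradient `∇F(x) = 2 M_F x = N x`. -/
def grad {m : ℕ} (N : Matrix (Fin m) (Fin m) ℤ) (x : Fin m → ℤ) : Fin m → ℤ :=
  fun i => ∑ j, N i j * x j

/-- `H_{λ,L}(y) = F(λ)/L + ∇F(λ)·y` (assuming `L ∣ F(λ)`). -/
def Hpoly {m : ℕ} (N : Matrix (Fin m) (Fin m) ℤ) (L : ℕ) (lam y : Fin m → ℤ) : ℤ :=
  Fint N lam / (L : ℤ) + ∑ i, grad N lam i * y i

/-- The additive character `e_q(t) = exp(2πit/q)`. -/
def eChar (q : ℕ) (t : ℝ) : ℂ := Complex.exp (2 * Real.pi * Complex.I * (t : ℂ) / (q : ℂ))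

/-- The dual form value `N_F(c) = cᵀ · adj(N) · c`, `N = 2 M_F`; this equals `2ⁿ F*(c)`. -/
def dualF {m : ℕ} (N : Matrix (Fin m) (Fin m) ℤ) (c : Fin m → ℤ) : ℤ :=
  ∑ i, ∑ j, N.adjugate i j * c i * c j

/-- The embedding sending the `i`-th of the `n-1` variables of `F₂` to coordinate `i+2`. -/
def emb {n : ℕ} (i : Fin (n-1)) : Fin (n+1) := ⟨i.val + 2, by have h := i.isLt; omega⟩

/-- The quadratic Gauss sum `ι_q = Σ_{x mod q} e_q(x²)`. -/
def iotaSum (q : ℕ) : ℂ := ∑ x ∈ Finset.range q, eChar q ((x : ℝ)^2)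

open Classical in
/-- The exponential sum `S_{q,L,λ}(c)`. -/
def Sq (n : ℕ) (N : Matrix (Fin (n+1)) (Fin (n+1)) ℤ) (q L : ℕ)
    (lam c : Fin (n+1) → ℤ) : ℂ :=
  ∑ a ∈ (Finset.range q).filter (fun a => Nat.gcd a q = 1),
    ∑ σ ∈ (Finset.univ : Finset (Fin (n+1) → Fin (q*L))).filter
        (fun σ => (L : ℤ) ∣ Hpoly N L lam (fun i => ((σ i : ℕ) : ℤ))),
      eChar (q*L)
        (((a : ℤ) * (Hpoly N L lam (fun i => ((σ i : ℕ) : ℤ))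
            + (L : ℤ) * Fint N (fun i => ((σ i : ℕ) : ℤ)))
          + ∑ i, c i * ((σ i : ℕ) : ℤ) : ℤ) : ℝ)

/-- The good-modulus factor `S⁽¹⁾_{q,L,λ}(c)` (for `q = q₁q₂`, `gcd(q₁,2LD) = 1`). -/
def S1 (n : ℕ) (N : Matrix (Fin (n+1)) (Fin (n+1)) ℤ) (q₁ q₂ L : ℕ) (k₁ : ℤ)
    (lam c : Fin (n+1) → ℤ) : ℂ :=
  ∑ σ : Fin (n+1) → Fin q₁,
    ∑ a ∈ (Finset.range q₁).filter (fun a => Nat.gcd a q₁ = 1),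
      eChar q₁
        (((a : ℤ) * (((q₂ : ℤ) * (L : ℤ))^2 * Fint N (fun i => ((σ i : ℕ) : ℤ))
              + (q₂ : ℤ) * ((∑ i, grad N lam i * ((σ i : ℕ) : ℤ)) + k₁))
          + ∑ i, c i * ((σ i : ℕ) : ℤ) : ℤ) : ℝ)

open Classical in
/-- The bad-modulus factor `S⁽²⁾_{q,L,λ}(c)`. -/
def S2 (n : ℕ) (N : Matrix (Fin (n+1)) (Fin (n+1)) ℤ) (q₁ q₂ L : ℕ) (k₂ : ℤ)
    (lam c : Fin (n+1) → ℤ) : ℂ :=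
  ∑ σ ∈ (Finset.univ : Finset (Fin (n+1) → Fin (q₂*L))).filter
      (fun σ => (L : ℤ) ∣ Hpoly N L lam (fun i => (q₁ : ℤ) * ((σ i : ℕ) : ℤ))),
    ∑ a ∈ (Finset.range q₂).filter (fun a => Nat.gcd a q₂ = 1),
      eChar (q₂*L)
        (((a : ℤ) * ((q₁ : ℤ)^2 * (L : ℤ) * Fint N (fun i => ((σ i : ℕ) : ℤ))
              + (q₁ : ℤ) * ((∑ i, grad N lam i * ((σ i : ℕ) : ℤ)) + k₂))
          + ∑ i, c i * ((σ i : ℕ) : ℤ) : ℤ) : ℝ)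

/-- The complete quadratic exponential sum `T_q(G,m;c)`. -/
def Tq (n : ℕ) (NG : Matrix (Fin (n+1)) (Fin (n+1)) ℤ) (q : ℕ) (m : ℤ)
    (c : Fin (n+1) → ℤ) : ℂ :=
  ∑ a ∈ (Finset.range q).filter (fun a => Nat.gcd a q = 1),
    ∑ b : Fin (n+1) → Fin q,
      eChar q (((a : ℤ) * (Fint NG (fun i => ((b i : ℕ) : ℤ)) - m)
        + ∑ i, c i * ((b i : ℕ) : ℤ) : ℤ) : ℝ)

/-- The counting function whose normalised limit is the local density
`σ_p(W;L,λ)`: the number of `v ∈ (ℤ/p^kℤ)^{n+1}` with `F(v) ≡ 0 mod p^k` and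
`v ≡ λ mod p^{ord_p L}`. -/
def localCount (n : ℕ) (N : Matrix (Fin (n+1)) (Fin (n+1)) ℤ) (L : ℕ)
    (lam : Fin (n+1) → ℤ) (p k : ℕ) : ℕ :=
  Nat.card {v : Fin (n+1) → Fin (p^k) //
    ((p : ℤ)^k ∣ Fint N (fun i => ((v i : ℕ) : ℤ))) ∧
    ∀ i, (p : ℤ)^(padicValNat p L) ∣ ((v i : ℕ) : ℤ) - lam i}

/-- The coordinates `t(x) = Mx` of an integer vector. -/
def tmap (n : ℕ) (M : Matrix (Fin (n+1)) (Fin (n+1)) ℝ) (x : Fin (n+1) → ℤ) :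
    Fin (n+1) → ℝ :=
  M.mulVec (fun i => (x i : ℝ))

/-- The counting function `N_W((R,ξ),(L,Γ);B)` for the affine cone. -/
def NW (n : ℕ) (N : Matrix (Fin (n+1)) (Fin (n+1)) ℤ)
    (M : Matrix (Fin (n+1)) (Fin (n+1)) ℝ) (a b : Fin (n+1) → ℝ)
    (B R : ℝ) (L : ℕ) (Γ : Fin (n+1) → ℤ) : ℕ :=
  Nat.card {x : Fin (n+1) → ℤ //
    x ≠ 0 ∧ Fint N x = 0 ∧ (∀ i, (L : ℤ) ∣ x i - Γ i) ∧
    tmap n M x 0 ≠ 0 ∧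
    (∀ j : Fin (n+1), 2 ≤ j.val →
      a j ≤ R * (tmap n M x j / tmap n M x 0) ∧ R * (tmap n M x j / tmap n M x 0) ≤ b j) ∧
    (∀ i, |tmap n M x i| ≤ B)}

/-- Twice the counting function `N_V((R,ξ),(L,Λ);B)` for the projective quadric:
the number of primitive integer vectors on the cone, in the real zoom region,
of height at most `B`, congruent mod `L` to a unit multiple of `Γ`. -/
def NV (n : ℕ) (N : Matrix (Fin (n+1)) (Fin (n+1)) ℤ)
    (M : Matrix (Fin (n+1)) (Fin (n+1)) ℝ) (a b : Fin (n+1) → ℝ)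
    (B R : ℝ) (L : ℕ) (Γ : Fin (n+1) → ℤ) : ℕ :=
  Nat.card {x : Fin (n+1) → ℤ //
    Finset.univ.gcd x = 1 ∧ Fint N x = 0 ∧
    tmap n M x 0 ≠ 0 ∧
    (∀ j : Fin (n+1), 2 ≤ j.val →
      a j ≤ R * (tmap n M x j / tmap n M x 0) ∧ R * (tmap n M x j / tmap n M x 0) ≤ b j) ∧
    (∀ i, |tmap n M x i| ≤ B) ∧
    (∃ γ : (ZMod L)ˣ, ∀ i, ((x i : ZMod L)) = (γ : ZMod L) * ((Γ i : ZMod L)))}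

/-- The value of the singular integral `I_R` for `R ≥ R₀`. -/
def IRval (n : ℕ) (M : Matrix (Fin (n+1)) (Fin (n+1)) ℝ) (a b : Fin (n+1) → ℝ)
    (R : ℝ) : ℝ :=
  2 * (∏ j ∈ Finset.univ.filter (fun j : Fin (n+1) => 2 ≤ j.val), (b j - a j))
    / (((n : ℝ) - 1) * |M.det| * R^(n-1))

/-- The error exponent factor `E_τ(B)`. -/
def Etau (n : ℕ) (τ B : ℝ) : ℝ :=
  if 5 ≤ n then B ^ (-(((n : ℝ) - 3) * τ / (5 * (n : ℝ) - 7)))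
  else B ^ (-(2 * τ / 17))

/-- The error factor `E_τ(1;B)` from the upper-bound range `-1 < τ < 1`. -/
def Etau1 (n : ℕ) (τ B : ℝ) : ℝ :=
  if 5 ≤ n then B ^ (-(((n : ℝ) - 3) * τ / 2))
  else B ^ (-τ) + B ^ (-((1 + τ)/4))

end Quad


namespace Quad

/-! ### Auxiliary lemmas for Lemma 4.2 -/

lemma eChar_int_add {q : ℕ} (hq : q ≠ 0) (s t : ℤ) :
    eChar q ((s + t : ℤ) : ℝ) = eChar q (s : ℝ) * eChar q (t : ℝ) := by
  unfold eChar
  rw [← Complex.exp_add]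
  congr 1
  have : (q : ℂ) ≠ 0 := by exact_mod_cast hq
  push_cast
  field_simp

lemma eChar_int_congr {q : ℕ} (hq : q ≠ 0) {s t : ℤ} (h : (q : ℤ) ∣ s - t) :
    eChar q (s : ℝ) = eChar q (t : ℝ) := by
  obtain ⟨u, hu⟩ := h
  have hs : s = t + q * u := by linarith
  subst hs
  rw [eChar_int_add hq]
  unfold eChar
  have hq' : (q : ℂ) ≠ 0 := by exact_mod_cast hq
  have : (2 * Real.pi * Complex.I * (((q * u : ℤ) : ℝ) : ℂ) / (q : ℂ))
      = u * (2 * Real.pi * Complex.I) := by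
    push_cast
    field_simp
  rw [this, Complex.exp_int_mul_two_pi_mul_I, mul_one]

lemma eChar_mul_mul {m q : ℕ} (hm : m ≠ 0) (hq : q ≠ 0) (t : ℤ) :
    eChar (m * q) ((m * t : ℤ) : ℝ) = eChar q (t : ℝ) := by
  unfold eChar
  congr 1
  have hm' : (m : ℂ) ≠ 0 := by exact_mod_cast hm
  have hq' : (q : ℂ) ≠ 0 := by exact_mod_cast hq
  push_cast
  field_simp

lemma two_dvd_Qsum {m : ℕ} (N : Matrix (Fin m) (Fin m) ℤ) (hNsym : N.IsSymm)
    (hNeven : ∀ i, Even (N i i)) (x : Fin m → ℤ) :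
    (2 : ℤ) ∣ ∑ i, ∑ j, N i j * x i * x j := by
  have h : ((∑ i, ∑ j, N i j * x i * x j : ℤ) : ZMod 2) = 0 := by
    push_cast
    rw [← Finset.sum_product']
    refine Finset.sum_involution (fun p _ => (p.2, p.1)) ?_ ?_ (fun p hp => Finset.mem_univ _) ?_
    · intro p _
      have hsym : N p.2 p.1 = N p.1 p.2 := by
        have := congrFun (congrFun hNsym p.1) p.2
        simpa [Matrix.transpose_apply] using this
      simp only [hsym]
      have : ((N p.1 p.2 : ZMod 2)) * (x p.1 : ZMod 2) * (x p.2 : ZMod 2)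
          + ((N p.1 p.2 : ZMod 2)) * (x p.2 : ZMod 2) * (x p.1 : ZMod 2)
          = 2 * (((N p.1 p.2 : ZMod 2)) * (x p.1 : ZMod 2) * (x p.2 : ZMod 2)) := by ring
      rw [this, show ((2 : ZMod 2)) = 0 from rfl, zero_mul]
    · intro p _ hne hcontra
      have h2 : p.2 = p.1 := congrArg Prod.fst hcontra
      apply hne
      have hz : ((N p.1 p.1 : ℤ) : ZMod 2) = 0 := by
        rw [ZMod.intCast_zmod_eq_zero_iff_dvd]
        exact_mod_cast (hNeven p.1).two_dvd
      rw [← h2] at hz ⊢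
      rw [hz, zero_mul, zero_mul]
    · intro p _; rfl
  rwa [ZMod.intCast_zmod_eq_zero_iff_dvd] at h

lemma two_mul_Fint {m : ℕ} (N : Matrix (Fin m) (Fin m) ℤ) (hNsym : N.IsSymm)
    (hNeven : ∀ i, Even (N i i)) (x : Fin m → ℤ) :
    2 * Fint N x = ∑ i, ∑ j, N i j * x i * x j :=
  Int.two_mul_ediv_two_of_even (even_iff_two_dvd.mpr (two_dvd_Qsum N hNsym hNeven x))

lemma bilin_comm {m : ℕ} (N : Matrix (Fin m) (Fin m) ℤ) (hNsym : N.IsSymm)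
    (x y : Fin m → ℤ) :
    ∑ i, ∑ j, N i j * x i * y j = ∑ i, ∑ j, N i j * y i * x j := by
  rw [Finset.sum_comm]
  refine Finset.sum_congr rfl fun i _ => Finset.sum_congr rfl fun j _ => ?_
  have h : N j i = N i j := by
    have := congrFun (congrFun hNsym i) j
    simpa using this
  rw [h]; ring

lemma Fint_add_mul {m : ℕ} (N : Matrix (Fin m) (Fin m) ℤ) (hNsym : N.IsSymm)
    (hNeven : ∀ i, Even (N i i)) (y e : Fin m → ℤ) (M : ℤ) :
    Fint N (fun i => y i + M * e i)
      = Fint N y + M * (∑ i, ∑ j, N i j * y i * e j) + M^2 * Fint N e := by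
  have key : 2 * Fint N (fun i => y i + M * e i)
      = 2 * (Fint N y + M * (∑ i, ∑ j, N i j * y i * e j) + M^2 * Fint N e) := by
    rw [two_mul_Fint N hNsym hNeven]
    have expand : ∑ i, ∑ j, N i j * (y i + M * e i) * (y j + M * e j)
        = (∑ i, ∑ j, N i j * y i * y j)
          + (M * ∑ i, ∑ j, N i j * y i * e j)
          + (M * ∑ i, ∑ j, N i j * e i * y j)
          + (M^2 * ∑ i, ∑ j, N i j * e i * e j) := by
      simp only [Finset.mul_sum]
      rw [← Finset.sum_add_distrib, ← Finset.sum_add_distrib, ← Finset.sum_add_distrib]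
      refine Finset.sum_congr rfl fun i _ => ?_
      rw [← Finset.sum_add_distrib, ← Finset.sum_add_distrib, ← Finset.sum_add_distrib]
      refine Finset.sum_congr rfl fun j _ => by ring
    rw [expand, bilin_comm N hNsym e y]
    rw [mul_add, mul_add, two_mul_Fint N hNsym hNeven, mul_left_comm (2 : ℤ) (M^2),
      two_mul_Fint N hNsym hNeven]
    ring
  exact mul_left_cancel₀ (two_ne_zero) key

lemma Fint_smul {m : ℕ} (N : Matrix (Fin m) (Fin m) ℤ) (hNsym : N.IsSymm)
    (hNeven : ∀ i, Even (N i i)) (x : Fin m → ℤ) (M : ℤ) :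
    Fint N (fun i => M * x i) = M^2 * Fint N x := by
  have := Fint_add_mul N hNsym hNeven (fun _ => 0) x M
  simpa [Fint] using this

/-- The key analytic identity for the summands. -/
lemma term_identity {m : ℕ} (N : Matrix (Fin m) (Fin m) ℤ) (hNsym : N.IsSymm)
    (hNeven : ∀ i, Even (N i i))
    (q₁ q₂ L : ℕ) (hq₁ : 0 < q₁) (hq₂ : 0 < q₂) (hL : 0 < L)
    (k k₁ k₂ a a₁ a₂ : ℤ) (g c σ σ₁ σ₂ : Fin m → ℤ)
    (hσ : ∀ i, ((q₁ : ℤ) * q₂ * L) ∣ σ i - ((q₂ : ℤ) * L * σ₁ i + (q₁ : ℤ) * σ₂ i))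
    (ha : ((q₁ : ℤ) * q₂) ∣ a - (a₁ * q₂ + a₂ * q₁))
    (hH : (L : ℤ) ∣ k + ∑ i, g i * σ i)
    (hk₁ : (q₁ : ℤ) ∣ k - k₁ * q₂ * L)
    (hk₂ : ((q₂ : ℤ) * L) ∣ k - k₂ * q₁)
    (cop : IsCoprime (q₁ : ℤ) (L : ℤ)) :
    eChar (q₁ * q₂ * L)
        ((a * ((k + ∑ i, g i * σ i) + (L : ℤ) * Fint N σ) + ∑ i, c i * σ i : ℤ) : ℝ)
      = eChar q₁
          ((a₁ * (((q₂ : ℤ) * L)^2 * Fint N σ₁ + (q₂ : ℤ) * ((∑ i, g i * σ₁ i) + k₁))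
            + ∑ i, c i * σ₁ i : ℤ) : ℝ)
        * eChar (q₂ * L)
          ((a₂ * ((q₁ : ℤ)^2 * L * Fint N σ₂ + (q₁ : ℤ) * ((∑ i, g i * σ₂ i) + k₂))
            + ∑ i, c i * σ₂ i : ℤ) : ℝ) := by
  have hq₁0 : q₁ ≠ 0 := hq₁.ne'
  have hq₂L0 : q₂ * L ≠ 0 := Nat.mul_ne_zero hq₂.ne' hL.ne'
  have hQ0 : q₁ * q₂ * L ≠ 0 := by positivity
  set τ : Fin m → ℤ := fun i => (q₂ : ℤ) * L * σ₁ i + (q₁ : ℤ) * σ₂ i with hτdef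
  set Q : ℤ := (q₁ : ℤ) * q₂ * L with hQdef
  have hσe : ∀ i, ∃ e : ℤ, σ i = τ i + Q * e := fun i => by
    obtain ⟨e, he⟩ := hσ i
    exact ⟨e, by simp only [hτdef]; linarith⟩
  choose e he using hσe
  have hσfun : σ = fun i => τ i + Q * e i := funext he
  set F₁ : ℤ := Fint N σ₁
  set F₂ : ℤ := Fint N σ₂
  set B : ℤ := ∑ i, ∑ j, N i j * σ₁ i * σ₂ j
  set G₁ : ℤ := ∑ i, g i * σ₁ i
  set G₂ : ℤ := ∑ i, g i * σ₂ i
  set C₁ : ℤ := ∑ i, c i * σ₁ i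
  set C₂ : ℤ := ∑ i, c i * σ₂ i
  have hFτ : Fint N τ = ((q₂ : ℤ) * L)^2 * F₁ + (q₂ : ℤ) * L * (q₁ : ℤ) * B + (q₁ : ℤ)^2 * F₂ := by
    have h1 : Fint N τ = Fint N (fun i => (q₂ : ℤ) * L * σ₁ i) +
        (q₁ : ℤ) * (∑ i, ∑ j, N i j * ((q₂ : ℤ) * L * σ₁ i) * σ₂ j) + (q₁ : ℤ)^2 * F₂ :=
      Fint_add_mul N hNsym hNeven (fun i => (q₂ : ℤ) * L * σ₁ i) σ₂ (q₁ : ℤ)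
    rw [h1, Fint_smul N hNsym hNeven σ₁ ((q₂ : ℤ) * L)]
    have h2 : (∑ i, ∑ j, N i j * ((q₂ : ℤ) * L * σ₁ i) * σ₂ j) = (q₂ : ℤ) * L * B := by
      rw [Finset.mul_sum]
      refine Finset.sum_congr rfl fun i _ => ?_
      rw [Finset.mul_sum]
      exact Finset.sum_congr rfl fun j _ => by ring
    rw [h2]; ring
  have hgτ : (∑ i, g i * τ i) = (q₂ : ℤ) * L * G₁ + (q₁ : ℤ) * G₂ := by
    simp only [hτdef]
    rw [Finset.mul_sum, Finset.mul_sum, ← Finset.sum_add_distrib]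
    exact Finset.sum_congr rfl fun i _ => by ring
  have hcτ : (∑ i, c i * τ i) = (q₂ : ℤ) * L * C₁ + (q₁ : ℤ) * C₂ := by
    simp only [hτdef]
    rw [Finset.mul_sum, Finset.mul_sum, ← Finset.sum_add_distrib]
    exact Finset.sum_congr rfl fun i _ => by ring
  have hFστ : Q ∣ Fint N σ - Fint N τ := by
    rw [hσfun, Fint_add_mul N hNsym hNeven τ e Q]
    have h2 : (Fint N τ + Q * (∑ i, ∑ j, N i j * τ i * e j) + Q^2 * Fint N e) - Fint N τ
        = Q * ((∑ i, ∑ j, N i j * τ i * e j) + Q * Fint N e) := by ring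
    rw [h2]; exact Dvd.intro _ rfl
  have hgστ : Q ∣ (∑ i, g i * σ i) - (∑ i, g i * τ i) := by
    rw [← Finset.sum_sub_distrib]
    refine Finset.dvd_sum fun i _ => ?_
    have : g i * σ i - g i * τ i = g i * (σ i - τ i) := by ring
    rw [this]
    exact Dvd.dvd.mul_left (hσ i) _
  have hcστ : Q ∣ (∑ i, c i * σ i) - (∑ i, c i * τ i) := by
    rw [← Finset.sum_sub_distrib]
    refine Finset.dvd_sum fun i _ => ?_
    have : c i * σ i - c i * τ i = c i * (σ i - τ i) := by ring
    rw [this]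
    exact Dvd.dvd.mul_left (hσ i) _
  have hHτ : (L : ℤ) ∣ k + ∑ i, g i * τ i := by
    have hLQ : (L : ℤ) ∣ Q := ⟨(q₁ : ℤ) * q₂, by rw [hQdef]; ring⟩
    have h0 := dvd_sub hH (hLQ.trans hgστ)
    have heq : k + ∑ i, g i * σ i - ((∑ i, g i * σ i) - (∑ i, g i * τ i))
        = k + ∑ i, g i * τ i := by ring
    rwa [heq] at h0
  have hD₁ : ((q₁ : ℤ) * L) ∣ (k - k₁ * (q₂ : ℤ) * L + (q₁ : ℤ) * G₂) := by
    have hq₁dvd : (q₁ : ℤ) ∣ (k - k₁ * (q₂ : ℤ) * L + (q₁ : ℤ) * G₂) :=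
      dvd_add hk₁ (Dvd.intro _ rfl)
    have hLdvd : (L : ℤ) ∣ (k - k₁ * (q₂ : ℤ) * L + (q₁ : ℤ) * G₂) := by
      have h1 : k - k₁ * (q₂ : ℤ) * L + (q₁ : ℤ) * G₂
          = (k + ∑ i, g i * τ i) - (L : ℤ) * ((q₂ : ℤ) * G₁ + k₁ * q₂) := by
        rw [hgτ]; ring
      rw [h1]
      exact dvd_sub hHτ (Dvd.intro _ rfl)
    exact (IsCoprime.mul_dvd cop hq₁dvd hLdvd)
  have hD₂ : ((q₂ : ℤ) * L) ∣ (k - k₂ * (q₁ : ℤ) + (q₂ : ℤ) * L * G₁) := by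
    refine dvd_add ?_ (Dvd.intro _ rfl)
    exact hk₂
  obtain ⟨d₁, hd₁⟩ := hD₁
  obtain ⟨d₂, hd₂⟩ := hD₂
  set E₁ : ℤ := a₁ * (((q₂ : ℤ) * L)^2 * F₁ + (q₂ : ℤ) * (G₁ + k₁)) + C₁ with hE₁
  set E₂ : ℤ := a₂ * ((q₁ : ℤ)^2 * L * F₂ + (q₁ : ℤ) * (G₂ + k₂)) + C₂ with hE₂
  have hrhs1 : eChar q₁ (E₁ : ℝ) = eChar (q₁ * q₂ * L) (((q₂ * L : ℕ) * E₁ : ℤ) : ℝ) := by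
    have h0 := eChar_mul_mul (q := q₁) hq₂L0 hq₁0 E₁
    rw [show (q₂ * L) * q₁ = q₁ * q₂ * L by ring] at h0
    rw [← h0]
  have hrhs2 : eChar (q₂ * L) (E₂ : ℝ) = eChar (q₁ * q₂ * L) (((q₁ : ℕ) * E₂ : ℤ) : ℝ) := by
    have h0 := eChar_mul_mul (m := q₁) (q := q₂ * L) hq₁0 hq₂L0 E₂
    rw [show q₁ * (q₂ * L) = q₁ * q₂ * L by ring] at h0
    rw [← h0]
  rw [hrhs1, hrhs2, ← eChar_int_add hQ0]
  refine eChar_int_congr hQ0 ?_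
  push_cast
  have step1 : Q ∣ (a * ((k + ∑ i, g i * σ i) + (L : ℤ) * Fint N σ) + ∑ i, c i * σ i)
      - (a * ((k + ∑ i, g i * τ i) + (L : ℤ) * Fint N τ) + ∑ i, c i * τ i) := by
    have h1 : (a * ((k + ∑ i, g i * σ i) + (L : ℤ) * Fint N σ) + ∑ i, c i * σ i)
        - (a * ((k + ∑ i, g i * τ i) + (L : ℤ) * Fint N τ) + ∑ i, c i * τ i)
        = a * ((∑ i, g i * σ i) - (∑ i, g i * τ i))
          + a * (L : ℤ) * (Fint N σ - Fint N τ)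
          + ((∑ i, c i * σ i) - (∑ i, c i * τ i)) := by ring
    rw [h1]
    exact dvd_add (dvd_add (hgστ.mul_left a) (hFστ.mul_left _)) hcστ
  set X : ℤ := (k + ∑ i, g i * τ i) + (L : ℤ) * Fint N τ with hX
  have hLX : (L : ℤ) ∣ X := dvd_add hHτ (Dvd.intro _ rfl)
  have step2 : Q ∣ (a * X + ∑ i, c i * τ i) - ((a₁ * q₂ + a₂ * q₁) * X + ∑ i, c i * τ i) := by
    have h1 : (a * X + ∑ i, c i * τ i) - ((a₁ * q₂ + a₂ * q₁) * X + ∑ i, c i * τ i)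
        = (a - (a₁ * q₂ + a₂ * q₁)) * X := by ring
    rw [h1]
    obtain ⟨u, hu⟩ := ha
    obtain ⟨v, hv⟩ := hLX
    rw [hu, hv, hQdef]
    exact ⟨u * v, by ring⟩
  have step3 : Q ∣ ((a₁ * q₂ + a₂ * q₁) * X + ∑ i, c i * τ i)
      - ((q₂ : ℤ) * L * E₁ + (q₁ : ℤ) * E₂) := by
    have key : ((a₁ * q₂ + a₂ * q₁) * X + ∑ i, c i * τ i)
        - ((q₂ : ℤ) * L * E₁ + (q₁ : ℤ) * E₂)
        = Q * ((q₂ : ℤ) * L^2 * F₁ * a₂ + L * B * (a₁ * q₂ + a₂ * q₁) + (q₁ : ℤ) * F₂ * a₁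
            + a₁ * d₁ + a₂ * d₂) := by
      rw [hX, hFτ, hgτ, hcτ, hE₁, hE₂, hQdef]
      linear_combination (a₁ * (q₂ : ℤ)) * hd₁ + (a₂ * (q₁ : ℤ)) * hd₂
    rw [key]
    exact Dvd.intro _ rfl
  have hfin := dvd_add (dvd_add step1 step2) step3
  have heq : ((a * ((k + ∑ i, g i * σ i) + (L : ℤ) * Fint N σ) + ∑ i, c i * σ i)
      - (a * ((k + ∑ i, g i * τ i) + (L : ℤ) * Fint N τ) + ∑ i, c i * τ i))
      + ((a * X + ∑ i, c i * τ i) - ((a₁ * q₂ + a₂ * q₁) * X + ∑ i, c i * τ i))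
      + (((a₁ * q₂ + a₂ * q₁) * X + ∑ i, c i * τ i) - ((q₂ : ℤ) * L * E₁ + (q₁ : ℤ) * E₂))
      = (a * ((k + ∑ i, g i * σ i) + (L : ℤ) * Fint N σ) + ∑ i, c i * σ i)
        - ((q₂ : ℤ) * L * E₁ + (q₁ : ℤ) * E₂) := by
    rw [hX]; ring
  rw [heq] at hfin
  exact hfin

lemma natCast_mod_sub_dvd (m n : ℕ) : (n : ℤ) ∣ ((m % n : ℕ) : ℤ) - (m : ℤ) := by
  have h := (Nat.mod_modEq m n).dvd
  rw [show ((m % n : ℕ) : ℤ) - (m : ℤ) = -((m : ℤ) - ((m % n : ℕ) : ℤ)) by ring]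
  exact dvd_neg.mpr h

lemma coprime_mod {x n : ℕ} (h : Nat.Coprime x n) : Nat.Coprime (x % n) n := by
  show Nat.gcd (x % n) n = 1
  rw [← Nat.gcd_rec, Nat.gcd_comm]
  exact h

lemma cast_mod_zmod {M n : ℕ} (h : M ∣ n) (x : ℕ) :
    ((x % n : ℕ) : ZMod M) = (x : ZMod M) := by
  rw [ZMod.natCast_eq_natCast_iff]
  exact (Nat.mod_modEq x n).of_dvd h

lemma crt_nat_eq {M₁ M₂ u v : ℕ} (cop : Nat.Coprime M₁ M₂) (hu : u < M₁ * M₂)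
    (hv : v < M₁ * M₂) (h₁ : (u : ZMod M₁) = (v : ZMod M₁))
    (h₂ : (u : ZMod M₂) = (v : ZMod M₂)) : u = v := by
  have e₁ := (ZMod.natCast_eq_natCast_iff _ _ _).mp h₁
  have e₂ := (ZMod.natCast_eq_natCast_iff _ _ _).mp h₂
  have e := (Nat.modEq_and_modEq_iff_modEq_mul cop).mp ⟨e₁, e₂⟩
  calc u = u % (M₁ * M₂) := (Nat.mod_eq_of_lt hu).symm
    _ = v % (M₁ * M₂) := e
    _ = v := Nat.mod_eq_of_lt hv

lemma dvd_sub_of_zmod_eq {M u v : ℕ} (h : (u : ZMod M) = (v : ZMod M)) :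
    (M : ℤ) ∣ (u : ℤ) - (v : ℤ) := by
  have h0 := ((ZMod.natCast_eq_natCast_iff _ _ _).mp h).dvd
  rw [show (u : ℤ) - (v : ℤ) = -((v : ℤ) - (u : ℤ)) by ring]
  exact dvd_neg.mpr h0

lemma hpoly_congr {m : ℕ} (N : Matrix (Fin m) (Fin m) ℤ) (L : ℕ) (lam : Fin m → ℤ)
    {x y : Fin m → ℤ} {d : ℤ} (h : ∀ i, d ∣ x i - y i) :
    d ∣ Hpoly N L lam x - Hpoly N L lam y := by
  have heq : Hpoly N L lam x - Hpoly N L lam y = ∑ i, grad N lam i * (x i - y i) := by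
    simp only [Hpoly]
    rw [add_sub_add_left_eq_sub, ← Finset.sum_sub_distrib]
    exact Finset.sum_congr rfl fun i _ => by ring
  rw [heq]
  exact Finset.dvd_sum fun i _ => (h i).mul_left _

end Quad

namespace Quad

/-- Lemma 4.2: multiplicative decomposition `S_{q,L,λ}(c) = S⁽¹⁾·S⁽²⁾` along
`q = q₁q₂` with `gcd(q₁, 2LD) = 1` and `q₂ ∣ (2LD)^∞`, where `D = det(2M_F)`. -/
theorem Sq_multiplicative_decomposition (n : ℕ) (hn : 2 ≤ n)
    (N : Matrix (Fin (n+1)) (Fin (n+1)) ℤ) (hNsym : N.IsSymm)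
    (hNeven : ∀ i, Even (N i i)) (hNdet : N.det ≠ 0)
    (L : ℕ) (hL : 0 < L)
    (lam : Fin (n+1) → ℤ) (hlam : (L : ℤ) ∣ Fint N lam)
    (q q₁ q₂ : ℕ) (hq₁ : 0 < q₁) (hq₂ : 0 < q₂) (hq : q = q₁ * q₂)
    (hcop : Int.gcd (q₁ : ℤ) (2 * L * N.det) = 1)
    (hbad : ∀ p : ℕ, p.Prime → p ∣ q₂ → (p : ℤ) ∣ 2 * L * N.det)
    (k₁ k₂ : ℤ)
    (hk₁ : (q₁ : ℤ) ∣ (Fint N lam / L - k₁ * q₂ * L))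
    (hk₂ : ((q₂ : ℤ) * L) ∣ (Fint N lam / L - k₂ * q₁)) :
    ∀ c : Fin (n+1) → ℤ,
      Sq n N q L lam c = S1 n N q₁ q₂ L k₁ lam c * S2 n N q₁ q₂ L k₂ lam c := by
  intro c
  subst hq
  classical
  have hq₁0 : q₁ ≠ 0 := hq₁.ne'
  have hq₂0 : q₂ ≠ 0 := hq₂.ne'
  have hL0 : L ≠ 0 := hL.ne'
  have hq₂L : 0 < q₂ * L := Nat.mul_pos hq₂ hL
  have hqq : 0 < q₁ * q₂ := Nat.mul_pos hq₁ hq₂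
  have hQpos : 0 < q₁ * q₂ * L := Nat.mul_pos hqq hL
  haveI : NeZero q₁ := ⟨hq₁0⟩
  haveI : NeZero q₂ := ⟨hq₂0⟩
  haveI : NeZero (q₂ * L) := ⟨hq₂L.ne'⟩
  have copZ : IsCoprime (q₁ : ℤ) (L : ℤ) :=
    (Int.isCoprime_iff_gcd_eq_one.mpr hcop).of_isCoprime_of_dvd_right ⟨2 * N.det, by ring⟩
  have cop1L : Nat.Coprime q₁ L := by
    have h0 := Int.isCoprime_iff_gcd_eq_one.mp copZ
    rwa [Int.gcd_natCast_natCast] at h0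
  have cop12 : Nat.Coprime q₁ q₂ := by
    by_contra hcon
    obtain ⟨p, hp, hp1, hp2⟩ := Nat.Prime.not_coprime_iff_dvd.mp hcon
    have h1 : (p : ℤ) ∣ (q₁ : ℤ) := Int.natCast_dvd_natCast.mpr hp1
    have h2 : (p : ℤ) ∣ 2 * L * N.det := hbad p hp hp2
    have h3 := Int.dvd_gcd h1 h2
    rw [hcop] at h3
    have h4 : (p : ℤ) ∣ 1 := by exact_mod_cast h3
    have h5 : p ∣ 1 := by exact_mod_cast h4
    exact hp.one_lt.ne' (Nat.eq_one_of_dvd_one h5)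
  have cop1_2L : Nat.Coprime q₁ (q₂ * L) := Nat.Coprime.mul_right cop12 cop1L
  have u2L : ((q₂ * L : ℕ) : ZMod q₁) * ((q₂ * L : ℕ) : ZMod q₁)⁻¹ = 1 :=
    ZMod.coe_mul_inv_eq_one _ cop1_2L.symm
  have u2 : ((q₂ : ℕ) : ZMod q₁) * ((q₂ : ℕ) : ZMod q₁)⁻¹ = 1 :=
    ZMod.coe_mul_inv_eq_one _ cop12.symm
  have u1a : ((q₁ : ℕ) : ZMod (q₂ * L)) * ((q₁ : ℕ) : ZMod (q₂ * L))⁻¹ = 1 :=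
    ZMod.coe_mul_inv_eq_one _ cop1_2L
  have u1b : ((q₁ : ℕ) : ZMod q₂) * ((q₁ : ℕ) : ZMod q₂)⁻¹ = 1 :=
    ZMod.coe_mul_inv_eq_one _ cop12
  have hcombH : ∀ (s1 : Fin (n+1) → Fin q₁) (s2 : Fin (n+1) → Fin (q₂ * L)),
      ((L : ℤ) ∣ Hpoly N L lam fun i => (q₁ : ℤ) * ((s2 i : ℕ) : ℤ)) →
      (L : ℤ) ∣ Hpoly N L lam
        (fun i => (((q₂ * L * ((s1 i : ℕ)) + q₁ * ((s2 i : ℕ))) % (q₁ * q₂ * L) : ℕ) : ℤ)) := by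
    intro s1 s2 hS2
    have hc : ∀ idx, (L : ℤ) ∣
        ((((q₂ * L * ((s1 idx : ℕ)) + q₁ * ((s2 idx : ℕ))) % (q₁ * q₂ * L) : ℕ)) : ℤ)
          - (q₁ : ℤ) * ((s2 idx : ℕ) : ℤ) := by
      intro idx
      have h1 := natCast_mod_sub_dvd (q₂ * L * ((s1 idx : ℕ)) + q₁ * ((s2 idx : ℕ))) (q₁ * q₂ * L)
      have hLd : (L : ℤ) ∣ ((q₁ * q₂ * L : ℕ) : ℤ) := ⟨(q₁ : ℤ) * q₂, by push_cast; ring⟩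
      have h2 := hLd.trans h1
      have hw : ((q₂ * L * ((s1 idx : ℕ)) + q₁ * ((s2 idx : ℕ)) : ℕ) : ℤ)
          = (q₂ : ℤ) * L * ((s1 idx : ℕ) : ℤ) + (q₁ : ℤ) * ((s2 idx : ℕ) : ℤ) := by
        push_cast; ring
      have h3 : ((((q₂ * L * ((s1 idx : ℕ)) + q₁ * ((s2 idx : ℕ))) % (q₁ * q₂ * L) : ℕ)) : ℤ)
            - (q₁ : ℤ) * ((s2 idx : ℕ) : ℤ)
          = (((((q₂ * L * ((s1 idx : ℕ)) + q₁ * ((s2 idx : ℕ))) % (q₁ * q₂ * L) : ℕ)) : ℤ)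
            - ((q₂ * L * ((s1 idx : ℕ)) + q₁ * ((s2 idx : ℕ)) : ℕ) : ℤ))
            + (q₂ : ℤ) * L * ((s1 idx : ℕ) : ℤ) := by
        rw [hw]; ring
      rw [h3]
      exact dvd_add h2 ⟨(q₂ : ℤ) * ((s1 idx : ℕ) : ℤ), by ring⟩
    have hmain := hpoly_congr N L lam
      (x := fun idx => (((q₂ * L * ((s1 idx : ℕ)) + q₁ * ((s2 idx : ℕ)))
        % (q₁ * q₂ * L) : ℕ) : ℤ))
      (y := fun idx => (q₁ : ℤ) * ((s2 idx : ℕ) : ℤ)) hc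
    have := dvd_add hmain hS2
    simpa using this
  simp only [Sq, S1, S2]
  conv_lhs => rw [← Finset.sum_product']
  conv_rhs => rw [← Finset.sum_product']
  conv_rhs => rw [← Finset.sum_product']
  rw [Finset.sum_mul_sum, ← Finset.sum_product']
  refine Eq.symm (Finset.sum_nbij'
    (fun p => (((p.1.2 : ℕ) * q₂ + (p.2.2 : ℕ) * q₁) % (q₁ * q₂),
      fun idx => (⟨(q₂ * L * ((p.1.1 idx : ℕ)) + q₁ * ((p.2.1 idx : ℕ))) % (q₁ * q₂ * L),
        Nat.mod_lt _ hQpos⟩ : Fin (q₁ * q₂ * L))))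
    (fun p => (((fun idx => (⟨((((p.2 idx : ℕ) : ZMod q₁)) * (((q₂ * L : ℕ) : ZMod q₁))⁻¹).val,
          ZMod.val_lt _⟩ : Fin q₁)),
        (((p.1 : ℕ) : ZMod q₁) * (((q₂ : ℕ) : ZMod q₁))⁻¹).val),
      ((fun idx => (⟨((((p.2 idx : ℕ) : ZMod (q₂ * L))) * (((q₁ : ℕ) : ZMod (q₂ * L)))⁻¹).val,
          ZMod.val_lt _⟩ : Fin (q₂ * L))),
        (((p.1 : ℕ) : ZMod q₂) * (((q₁ : ℕ) : ZMod q₂))⁻¹).val)))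
    ?_ ?_ ?_ ?_ ?_)
  -- (1) combine maps into the Sq index set
  · rintro ⟨⟨s1, a1⟩, ⟨s2, a2⟩⟩ hp
    simp only [Finset.mem_product, Finset.mem_filter, Finset.mem_univ, Finset.mem_range,
      true_and] at hp ⊢
    obtain ⟨⟨ha1lt, ha1⟩, hS2, ha2lt, ha2⟩ := hp
    refine ⟨⟨Nat.mod_lt _ hqq, ?_⟩, ?_⟩
    · have c1 : Nat.Coprime (a1 * q₂ + a2 * q₁) q₁ := by
        rw [← ZMod.isUnit_iff_coprime]
        push_cast
        rw [ZMod.natCast_self, mul_zero, add_zero]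
        exact ((ZMod.isUnit_iff_coprime a1 q₁).mpr ha1).mul
          ((ZMod.isUnit_iff_coprime q₂ q₁).mpr cop12.symm)
      have c2 : Nat.Coprime (a1 * q₂ + a2 * q₁) q₂ := by
        rw [← ZMod.isUnit_iff_coprime]
        push_cast
        rw [ZMod.natCast_self, mul_zero, zero_add]
        exact ((ZMod.isUnit_iff_coprime a2 q₂).mpr ha2).mul
          ((ZMod.isUnit_iff_coprime q₁ q₂).mpr cop12)
      exact coprime_mod (Nat.Coprime.mul_right c1 c2)
    · exact hcombH s1 s2 hS2
  -- (2) split maps into the product index set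
  · rintro ⟨a, σ⟩ hp
    simp only [Finset.mem_product, Finset.mem_filter, Finset.mem_univ, Finset.mem_range,
      true_and] at hp ⊢
    obtain ⟨⟨halt, ha⟩, hS⟩ := hp
    have ca1 : Nat.Coprime a q₁ := Nat.Coprime.coprime_dvd_right (dvd_mul_right q₁ q₂) ha
    have ca2 : Nat.Coprime a q₂ := Nat.Coprime.coprime_dvd_right (dvd_mul_left q₂ q₁) ha
    refine ⟨⟨ZMod.val_lt _, ?_⟩, ?_, ZMod.val_lt _, ?_⟩
    · show Nat.Coprime _ q₁
      rw [← ZMod.isUnit_iff_coprime]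
      have hrt : ((((a : ZMod q₁) * ((q₂ : ZMod q₁))⁻¹).val : ℕ) : ZMod q₁)
          = (a : ZMod q₁) * ((q₂ : ZMod q₁))⁻¹ := by
        simp [ZMod.natCast_val, ZMod.cast_id]
      rw [hrt]
      exact ((ZMod.isUnit_iff_coprime a q₁).mpr ca1).mul
        (IsUnit.of_mul_eq_one _ (by rw [mul_comm]; exact u2))
    · -- the Hpoly condition for the split σ₂
      have hc : ∀ idx, (L : ℤ) ∣
          (q₁ : ℤ) * (((((σ idx : ℕ) : ZMod (q₂ * L)) * (((q₁ : ℕ) : ZMod (q₂ * L)))⁻¹).val : ℤ))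
            - ((σ idx : ℕ) : ℤ) := by
        intro idx
        set x : ZMod (q₂ * L) := ((σ idx : ℕ) : ZMod (q₂ * L)) * (((q₁ : ℕ) : ZMod (q₂ * L)))⁻¹
          with hx
        have hz : ((q₁ * x.val : ℕ) : ZMod (q₂ * L)) = ((σ idx : ℕ) : ZMod (q₂ * L)) := by
          rw [Nat.cast_mul]
          have hrt : ((x.val : ℕ) : ZMod (q₂ * L)) = x := by
            simp [ZMod.natCast_val, ZMod.cast_id]
          rw [hrt, hx, show ((q₁ : ℕ) : ZMod (q₂ * L)) * (((σ idx : ℕ) : ZMod (q₂ * L))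
              * (((q₁ : ℕ) : ZMod (q₂ * L)))⁻¹)
            = ((σ idx : ℕ) : ZMod (q₂ * L)) * (((q₁ : ℕ) : ZMod (q₂ * L))
              * (((q₁ : ℕ) : ZMod (q₂ * L)))⁻¹) from by ring, u1a, mul_one]
        have h4 := dvd_sub_of_zmod_eq hz
        have hL2L : (L : ℤ) ∣ ((q₂ * L : ℕ) : ℤ) := ⟨(q₂ : ℤ), by push_cast; ring⟩
        have h5 := hL2L.trans h4
        have hcast : ((q₁ * x.val : ℕ) : ℤ) = (q₁ : ℤ) * ((x.val : ℕ) : ℤ) := by push_cast; ring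
        rwa [hcast] at h5
      have hmain := hpoly_congr N L lam
        (x := fun idx => (q₁ : ℤ) *
          (((((σ idx : ℕ) : ZMod (q₂ * L)) * (((q₁ : ℕ) : ZMod (q₂ * L)))⁻¹).val : ℤ)))
        (y := fun idx => ((σ idx : ℕ) : ℤ)) hc
      have := dvd_add hmain hS
      simpa using this
    · show Nat.Coprime _ q₂
      rw [← ZMod.isUnit_iff_coprime]
      have hrt : ((((a : ZMod q₂) * ((q₁ : ZMod q₂))⁻¹).val : ℕ) : ZMod q₂)
          = (a : ZMod q₂) * ((q₁ : ZMod q₂))⁻¹ := by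
        simp [ZMod.natCast_val, ZMod.cast_id]
      rw [hrt]
      exact ((ZMod.isUnit_iff_coprime a q₂).mpr ca2).mul
        (IsUnit.of_mul_eq_one _ (by rw [mul_comm]; exact u1b))
  -- (3) left inverse
  · rintro ⟨⟨s1, a1⟩, ⟨s2, a2⟩⟩ hp
    simp only [Finset.mem_product, Finset.mem_filter, Finset.mem_univ, Finset.mem_range,
      true_and] at hp
    obtain ⟨⟨ha1lt, _⟩, _, ha2lt, _⟩ := hp
    simp only [Prod.mk.injEq]
    refine ⟨⟨funext fun idx => ?_, ?_⟩, funext fun idx => ?_, ?_⟩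
    · -- σ₁ component
      apply Fin.ext
      show ((((q₂ * L * ((s1 idx : ℕ)) + q₁ * ((s2 idx : ℕ))) % (q₁ * q₂ * L) : ℕ) : ZMod q₁)
        * (((q₂ * L : ℕ) : ZMod q₁))⁻¹).val = (s1 idx : ℕ)
      have e1 : (((q₂ * L * ((s1 idx : ℕ)) + q₁ * ((s2 idx : ℕ))) % (q₁ * q₂ * L) : ℕ) : ZMod q₁)
          = ((q₂ * L : ℕ) : ZMod q₁) * ((s1 idx : ℕ) : ZMod q₁) := by
        rw [cast_mod_zmod ⟨q₂ * L, by ring⟩, Nat.cast_add, Nat.cast_mul (q₂ * L),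
          Nat.cast_mul q₁, ZMod.natCast_self, zero_mul, add_zero]
      rw [e1, show ((q₂ * L : ℕ) : ZMod q₁) * ((s1 idx : ℕ) : ZMod q₁)
            * (((q₂ * L : ℕ) : ZMod q₁))⁻¹
          = ((s1 idx : ℕ) : ZMod q₁) * (((q₂ * L : ℕ) : ZMod q₁)
            * (((q₂ * L : ℕ) : ZMod q₁))⁻¹) from by ring, u2L, mul_one,
        ZMod.val_cast_of_lt (s1 idx).isLt]
    · -- a₁ component
      show ((((a1 * q₂ + a2 * q₁) % (q₁ * q₂) : ℕ) : ZMod q₁) * (((q₂ : ℕ) : ZMod q₁))⁻¹).val = a1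
      have e1 : (((a1 * q₂ + a2 * q₁) % (q₁ * q₂) : ℕ) : ZMod q₁)
          = ((a1 : ℕ) : ZMod q₁) * ((q₂ : ℕ) : ZMod q₁) := by
        rw [cast_mod_zmod ⟨q₂, rfl⟩, Nat.cast_add, Nat.cast_mul, Nat.cast_mul,
          ZMod.natCast_self, mul_zero, add_zero]
      rw [e1, show ((a1 : ℕ) : ZMod q₁) * ((q₂ : ℕ) : ZMod q₁) * (((q₂ : ℕ) : ZMod q₁))⁻¹
          = ((a1 : ℕ) : ZMod q₁) * (((q₂ : ℕ) : ZMod q₁) * (((q₂ : ℕ) : ZMod q₁))⁻¹) from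
          by ring, u2, mul_one, ZMod.val_cast_of_lt ha1lt]
    · -- σ₂ component
      apply Fin.ext
      show ((((q₂ * L * ((s1 idx : ℕ)) + q₁ * ((s2 idx : ℕ))) % (q₁ * q₂ * L) : ℕ) : ZMod (q₂ * L))
        * (((q₁ : ℕ) : ZMod (q₂ * L)))⁻¹).val = (s2 idx : ℕ)
      have e1 : (((q₂ * L * ((s1 idx : ℕ)) + q₁ * ((s2 idx : ℕ))) % (q₁ * q₂ * L) : ℕ)
            : ZMod (q₂ * L))
          = ((q₁ : ℕ) : ZMod (q₂ * L)) * ((s2 idx : ℕ) : ZMod (q₂ * L)) := by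
        rw [cast_mod_zmod ⟨q₁, by ring⟩, Nat.cast_add, Nat.cast_mul (q₂ * L),
          Nat.cast_mul q₁, ZMod.natCast_self, zero_mul, zero_add]
      rw [e1, show ((q₁ : ℕ) : ZMod (q₂ * L)) * ((s2 idx : ℕ) : ZMod (q₂ * L))
            * (((q₁ : ℕ) : ZMod (q₂ * L)))⁻¹
          = ((s2 idx : ℕ) : ZMod (q₂ * L)) * (((q₁ : ℕ) : ZMod (q₂ * L))
            * (((q₁ : ℕ) : ZMod (q₂ * L)))⁻¹) from by ring, u1a, mul_one,
        ZMod.val_cast_of_lt (s2 idx).isLt]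
    · -- a₂ component
      show ((((a1 * q₂ + a2 * q₁) % (q₁ * q₂) : ℕ) : ZMod q₂) * (((q₁ : ℕ) : ZMod q₂))⁻¹).val = a2
      have e1 : (((a1 * q₂ + a2 * q₁) % (q₁ * q₂) : ℕ) : ZMod q₂)
          = ((a2 : ℕ) : ZMod q₂) * ((q₁ : ℕ) : ZMod q₂) := by
        rw [cast_mod_zmod ⟨q₁, by ring⟩, Nat.cast_add, Nat.cast_mul, Nat.cast_mul,
          ZMod.natCast_self, mul_zero, zero_add]
      rw [e1, show ((a2 : ℕ) : ZMod q₂) * ((q₁ : ℕ) : ZMod q₂) * (((q₁ : ℕ) : ZMod q₂))⁻¹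
          = ((a2 : ℕ) : ZMod q₂) * (((q₁ : ℕ) : ZMod q₂) * (((q₁ : ℕ) : ZMod q₂))⁻¹) from
          by ring, u1b, mul_one, ZMod.val_cast_of_lt ha2lt]
  -- (4) right inverse
  · rintro ⟨a, σ⟩ hp
    simp only [Finset.mem_product, Finset.mem_filter, Finset.mem_univ, Finset.mem_range,
      true_and] at hp
    obtain ⟨⟨halt, _⟩, _⟩ := hp
    simp only [Prod.mk.injEq]
    constructor
    · -- a component
      refine crt_nat_eq cop12 (Nat.mod_lt _ hqq) halt ?_ ?_
      · rw [cast_mod_zmod ⟨q₂, rfl⟩, Nat.cast_add, Nat.cast_mul, Nat.cast_mul,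
          ZMod.natCast_self, mul_zero, add_zero]
        have hrt : ((((a : ZMod q₁) * ((q₂ : ZMod q₁))⁻¹).val : ℕ) : ZMod q₁)
            = (a : ZMod q₁) * ((q₂ : ZMod q₁))⁻¹ := by
          simp [ZMod.natCast_val, ZMod.cast_id]
        rw [hrt, show (a : ZMod q₁) * ((q₂ : ZMod q₁))⁻¹ * ((q₂ : ℕ) : ZMod q₁)
            = (a : ZMod q₁) * (((q₂ : ℕ) : ZMod q₁) * ((q₂ : ZMod q₁))⁻¹) from by ring,
          u2, mul_one]
      · rw [cast_mod_zmod ⟨q₁, by ring⟩, Nat.cast_add, Nat.cast_mul, Nat.cast_mul,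
          ZMod.natCast_self, mul_zero, zero_add]
        have hrt : ((((a : ZMod q₂) * ((q₁ : ZMod q₂))⁻¹).val : ℕ) : ZMod q₂)
            = (a : ZMod q₂) * ((q₁ : ZMod q₂))⁻¹ := by
          simp [ZMod.natCast_val, ZMod.cast_id]
        rw [hrt, show (a : ZMod q₂) * ((q₁ : ZMod q₂))⁻¹ * ((q₁ : ℕ) : ZMod q₂)
            = (a : ZMod q₂) * (((q₁ : ℕ) : ZMod q₂) * ((q₁ : ZMod q₂))⁻¹) from by ring,
          u1b, mul_one]
    · -- σ component
      funext idx
      apply Fin.ext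
      show (q₂ * L * ((((σ idx : ℕ) : ZMod q₁) * (((q₂ * L : ℕ) : ZMod q₁))⁻¹).val)
          + q₁ * ((((σ idx : ℕ) : ZMod (q₂ * L)) * (((q₁ : ℕ) : ZMod (q₂ * L)))⁻¹).val))
          % (q₁ * q₂ * L) = (σ idx : ℕ)
      have hlt1 : (q₂ * L * ((((σ idx : ℕ) : ZMod q₁) * (((q₂ * L : ℕ) : ZMod q₁))⁻¹).val)
          + q₁ * ((((σ idx : ℕ) : ZMod (q₂ * L)) * (((q₁ : ℕ) : ZMod (q₂ * L)))⁻¹).val))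
          % (q₁ * q₂ * L) < q₁ * (q₂ * L) := by
        rw [← mul_assoc]; exact Nat.mod_lt _ hQpos
      have hlt2 : (σ idx : ℕ) < q₁ * (q₂ * L) := by
        rw [← mul_assoc]; exact (σ idx).isLt
      refine crt_nat_eq cop1_2L hlt1 hlt2 ?_ ?_
      · rw [cast_mod_zmod ⟨q₂ * L, by ring⟩, Nat.cast_add, Nat.cast_mul (q₂ * L),
          Nat.cast_mul q₁, ZMod.natCast_self, zero_mul, add_zero]
        have hrt : (((((σ idx : ℕ) : ZMod q₁) * (((q₂ * L : ℕ) : ZMod q₁))⁻¹).val : ℕ) : ZMod q₁)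
            = ((σ idx : ℕ) : ZMod q₁) * (((q₂ * L : ℕ) : ZMod q₁))⁻¹ := by
          simp [ZMod.natCast_val, ZMod.cast_id]
        rw [hrt, show ((q₂ * L : ℕ) : ZMod q₁) * (((σ idx : ℕ) : ZMod q₁)
              * (((q₂ * L : ℕ) : ZMod q₁))⁻¹)
            = ((σ idx : ℕ) : ZMod q₁) * (((q₂ * L : ℕ) : ZMod q₁)
              * (((q₂ * L : ℕ) : ZMod q₁))⁻¹) from by ring, u2L, mul_one]
      · rw [cast_mod_zmod ⟨q₁, by ring⟩, Nat.cast_add, Nat.cast_mul (q₂ * L),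
          Nat.cast_mul q₁, ZMod.natCast_self, zero_mul, zero_add]
        have hrt : (((((σ idx : ℕ) : ZMod (q₂ * L)) * (((q₁ : ℕ) : ZMod (q₂ * L)))⁻¹).val : ℕ)
              : ZMod (q₂ * L))
            = ((σ idx : ℕ) : ZMod (q₂ * L)) * (((q₁ : ℕ) : ZMod (q₂ * L)))⁻¹ := by
          simp [ZMod.natCast_val, ZMod.cast_id]
        rw [hrt, show ((q₁ : ℕ) : ZMod (q₂ * L)) * (((σ idx : ℕ) : ZMod (q₂ * L))
              * (((q₁ : ℕ) : ZMod (q₂ * L)))⁻¹)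
            = ((σ idx : ℕ) : ZMod (q₂ * L)) * (((q₁ : ℕ) : ZMod (q₂ * L))
              * (((q₁ : ℕ) : ZMod (q₂ * L)))⁻¹) from by ring, u1a, mul_one]
  -- (5) the term identity
  · rintro ⟨⟨s1, a1⟩, ⟨s2, a2⟩⟩ hp
    simp only [Finset.mem_product, Finset.mem_filter, Finset.mem_univ, Finset.mem_range,
      true_and] at hp
    obtain ⟨⟨ha1lt, ha1⟩, hS2, ha2lt, ha2⟩ := hp
    have hσ : ∀ idx : Fin (n+1), ((q₁ : ℤ) * q₂ * L) ∣
        ((((q₂ * L * ((s1 idx : ℕ)) + q₁ * ((s2 idx : ℕ))) % (q₁ * q₂ * L) : ℕ)) : ℤ)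
          - ((q₂ : ℤ) * L * ((s1 idx : ℕ) : ℤ) + (q₁ : ℤ) * ((s2 idx : ℕ) : ℤ)) := by
      intro idx
      have h1 := natCast_mod_sub_dvd (q₂ * L * ((s1 idx : ℕ)) + q₁ * ((s2 idx : ℕ))) (q₁ * q₂ * L)
      have hcast : ((q₁ * q₂ * L : ℕ) : ℤ) = (q₁ : ℤ) * q₂ * L := by push_cast; ring
      have hw : ((q₂ * L * ((s1 idx : ℕ)) + q₁ * ((s2 idx : ℕ)) : ℕ) : ℤ)
          = (q₂ : ℤ) * L * ((s1 idx : ℕ) : ℤ) + (q₁ : ℤ) * ((s2 idx : ℕ) : ℤ) := by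
        push_cast; ring
      rw [hcast, hw] at h1
      exact h1
    have ha : ((q₁ : ℤ) * q₂) ∣ (((a1 * q₂ + a2 * q₁) % (q₁ * q₂) : ℕ) : ℤ)
        - ((a1 : ℤ) * q₂ + (a2 : ℤ) * q₁) := by
      have h1 := natCast_mod_sub_dvd (a1 * q₂ + a2 * q₁) (q₁ * q₂)
      have hcast : ((q₁ * q₂ : ℕ) : ℤ) = (q₁ : ℤ) * q₂ := by push_cast; ring
      have hw : ((a1 * q₂ + a2 * q₁ : ℕ) : ℤ) = (a1 : ℤ) * q₂ + (a2 : ℤ) * q₁ := by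
        push_cast; ring
      rw [hcast, hw] at h1
      exact h1
    have hH : (L : ℤ) ∣ Hpoly N L lam
        (fun i => (((q₂ * L * ((s1 i : ℕ)) + q₁ * ((s2 i : ℕ))) % (q₁ * q₂ * L) : ℕ) : ℤ)) :=
      hcombH s1 s2 hS2
    exact (term_identity N hNsym hNeven q₁ q₂ L hq₁ hq₂ hL
      (Fint N lam / (L : ℤ)) k₁ k₂
      ((((a1 * q₂ + a2 * q₁) % (q₁ * q₂) : ℕ)) : ℤ) (a1 : ℤ) (a2 : ℤ)
      (grad N lam) c
      (fun i => (((q₂ * L * ((s1 i : ℕ)) + q₁ * ((s2 i : ℕ))) % (q₁ * q₂ * L) : ℕ) : ℤ))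
      (fun i => ((s1 i : ℕ) : ℤ)) (fun i => ((s2 i : ℕ) : ℤ))
      hσ ha hH hk₁ hk₂ copZ).symm

end Quad
end
end

section
/- (Lattice-point upper bound valid in all ranges.) There is a constant C depending only on F, ξ, M and the a_j, b_j such that for all real B ≥ 1, R ≥ 1, all integers L ≥ 1 and all Γ ∈ ℤ^{n+1}: N_W((R,ξ),(L,Γ);B) ≤ C·( 1 + B^{n+1}/(L^{n+1}·Rⁿ) + Σ_{k=1}^{n} B^{k}/(L^{k}·R^{k−1}) ). -/
open scoped BigOperators
open Finset Filter Topology Matrix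

noncomputable section

namespace Quad

lemma even_quadsum {m : ℕ} (N : Matrix (Fin m) (Fin m) ℤ) (hsym : N.IsSymm)
    (heven : ∀ i, Even (N i i)) (x : Fin m → ℤ) :
    Even (∑ i, ∑ j, N i j * x i * x j) := by
  have h2 : ((∑ i, ∑ j, N i j * x i * x j : ℤ) : ZMod 2) = 0 := by
    push_cast
    rw [← Finset.sum_product']
    refine Finset.sum_ninvolution (fun p => (p.2, p.1)) ?_ ?_ ?_ ?_
    · intro p
      have h : N p.2 p.1 = N p.1 p.2 := hsym.apply p.1 p.2
      simp only [h]
      rw [show ((N p.1 p.2 : ZMod 2)) * (x p.1 : ZMod 2) * (x p.2 : ZMod 2)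
          + ((N p.1 p.2 : ZMod 2)) * (x p.2 : ZMod 2) * (x p.1 : ZMod 2)
          = 2 * (((N p.1 p.2 : ZMod 2)) * (x p.1 : ZMod 2) * (x p.2 : ZMod 2)) by ring]
      rw [show (2 : ZMod 2) = 0 by decide, zero_mul]
    · intro p hp
      by_contra hcon
      have h1 : p.2 = p.1 := congrArg Prod.fst hcon
      apply hp
      have h0 : ((N p.1 p.2 : ℤ) : ZMod 2) = 0 := by
        rw [h1, ZMod.intCast_zmod_eq_zero_iff_dvd]
        exact (heven p.1).two_dvd
      rw [h0, zero_mul, zero_mul]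
    · intro p; simp
    · intro p; rfl
  rw [even_iff_two_dvd]
  exact_mod_cast (ZMod.intCast_zmod_eq_zero_iff_dvd _ 2).mp h2


set_option maxHeartbeats 1000000 in
/-- Lemma 7.3 (lattice-point upper bound valid in all ranges):
`N_W((R,ξ),(L,Γ);B) ≪ 1 + B^{n+1}/(L^{n+1}Rⁿ) + Σ_{k=1}^n B^k/(L^k R^{k−1})`. -/
theorem NW_lattice_upper_bound (n : ℕ) (hn : 2 ≤ n)
    (N : Matrix (Fin (n+1)) (Fin (n+1)) ℤ) (hNsym : N.IsSymm)
    (hNeven : ∀ i, Even (N i i)) (hNdet : N.det ≠ 0)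
    (ξ : Fin (n+1) → ℝ) (hξ : ξ ≠ 0) (hFξ : FR N ξ = 0)
    (M : Matrix (Fin (n+1)) (Fin (n+1)) ℝ) (hM : IsUnit M)
    (hMξ : M.mulVec ξ = fun i => if i = 0 then 1 else 0)
    (G : Matrix (Fin (n-1)) (Fin (n-1)) ℝ) (hGsym : G.IsSymm) (hGdet : G.det ≠ 0)
    (hWitt : ∀ t : Fin (n+1) → ℝ,
      FR N (M⁻¹.mulVec t) = t 0 * t 1 + QFR G (fun i => t (emb i)))
    (a b : Fin (n+1) → ℝ) (hab : ∀ j : Fin (n+1), 2 ≤ j.val → a j < b j) :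
    ∃ C : ℝ, 0 < C ∧
      ∀ (B R : ℝ), 1 ≤ B → 1 ≤ R → ∀ (L : ℕ), 1 ≤ L → ∀ Γ : Fin (n+1) → ℤ,
        (NW n N M a b B R L Γ : ℝ)
          ≤ C * (1 + B^(n+1) / ((L : ℝ)^(n+1) * R^n)
              + ∑ k ∈ Finset.Icc 1 n, B^k / ((L : ℝ)^k * R^(k-1))) := by
  classical
  have hMdet : IsUnit M.det := (Matrix.isUnit_iff_isUnit_det M).mp hM
  have h10 : (1 : Fin (n+1)) ≠ 0 := by
    intro h
    have h' := congrArg Fin.val h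
    rw [Fin.val_one', Fin.val_zero, Nat.mod_eq_of_lt (by omega)] at h'
    exact one_ne_zero h'
  obtain ⟨c1, hc1def⟩ : ∃ c : ℝ, c = 1 + ∑ j, (|a j| + |b j|) := ⟨_, rfl⟩
  have hc1 : 1 ≤ c1 := by
    rw [hc1def]
    exact le_add_of_nonneg_right (Finset.sum_nonneg fun j _ => by positivity)
  have hc1ab : ∀ j : Fin (n+1), |a j| ≤ c1 ∧ |b j| ≤ c1 := by
    intro j
    have h1 : |a j| + |b j| ≤ ∑ j, (|a j| + |b j|) :=
      Finset.single_le_sum (f := fun j => |a j| + |b j|) (fun j _ => by positivity)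
        (Finset.mem_univ j)
    constructor <;>
      · rw [hc1def]
        have := abs_nonneg (a j); have := abs_nonneg (b j); linarith
  obtain ⟨cG, hcGdef⟩ : ∃ c : ℝ, c = 1 + ∑ i, ∑ j, |G i j| := ⟨_, rfl⟩
  have hcG : 1 ≤ cG := by
    rw [hcGdef]
    exact le_add_of_nonneg_right (Finset.sum_nonneg fun i _ =>
      Finset.sum_nonneg fun j _ => abs_nonneg _)
  obtain ⟨c2, hc2def⟩ : ∃ c : ℝ, c = cG * c1^2 := ⟨_, rfl⟩
  have hc2 : 1 ≤ c2 := by rw [hc2def]; nlinarith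
  obtain ⟨c6, hc6def⟩ : ∃ c : ℝ, c = 1 + ∑ i, ∑ j, |M⁻¹ i j| := ⟨_, rfl⟩
  have hc6 : 1 ≤ c6 := by
    rw [hc6def]
    exact le_add_of_nonneg_right (Finset.sum_nonneg fun i _ =>
      Finset.sum_nonneg fun j _ => abs_nonneg _)
  have hc6row : ∀ i, ∑ j, |M⁻¹ i j| ≤ c6 := by
    intro i
    have h1 : ∑ j, |M⁻¹ i j| ≤ ∑ i, ∑ j, |M⁻¹ i j| :=
      Finset.single_le_sum (f := fun i => ∑ j, |M⁻¹ i j|)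
        (fun i _ => Finset.sum_nonneg fun j _ => abs_nonneg _) (Finset.mem_univ i)
    rw [hc6def]; linarith
  obtain ⟨K, hKdef⟩ : ∃ c : ℝ, c = 2 * c6 * (c1 + c2 + 1) := ⟨_, rfl⟩
  have hK : 1 ≤ K := by rw [hKdef]; nlinarith
  have hKpos : 0 < K := by linarith
  refine ⟨(3:ℝ)^(n+1) * 2^(n+1) * K^(n+1),
    mul_pos (by positivity) (pow_pos hKpos _), ?_⟩
  intro B R hB hR L hL Γ
  have hLpos : (0:ℝ) < (L:ℝ) := by exact_mod_cast hL
  have hL1 : (1:ℝ) ≤ (L:ℝ) := by exact_mod_cast hL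
  have hBpos : (0:ℝ) < B := by linarith
  have hRpos : (0:ℝ) < R := by linarith
  obtain ⟨d, hddef⟩ : ∃ c : ℝ, c = (L:ℝ) / (2 * c6) := ⟨_, rfl⟩
  have hdpos : 0 < d := by rw [hddef]; exact div_pos hLpos (by linarith)
  obtain ⟨s, hsdef⟩ : ∃ s : Fin (n+1) → ℝ,
      s = fun i => if i = 0 then B else if i = 1 then c2*B/R^2 else c1*B/R := ⟨_, rfl⟩
  have hs0 : s 0 = B := by simp [hsdef]
  have hs1 : s 1 = c2*B/R^2 := by simp [hsdef, h10]
  have hsoth : ∀ i : Fin (n+1), i ≠ 0 → i ≠ 1 → s i = c1*B/R := by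
    intro i h0 h1
    simp only [hsdef]; rw [if_neg h0, if_neg h1]
  have hspos : ∀ i, 0 < s i := by
    intro i
    by_cases h0 : i = 0
    · rw [h0, hs0]; exact hBpos
    by_cases h1 : i = 1
    · rw [h1, hs1]
      exact div_pos (mul_pos (by linarith) hBpos) (pow_pos hRpos 2)
    · rw [hsoth i h0 h1]
      exact div_pos (mul_pos (by linarith) hBpos) hRpos
  -- the geometric claim
  have key : ∀ x : Fin (n+1) → ℤ,
      (x ≠ 0 ∧ Fint N x = 0 ∧ (∀ i, (L : ℤ) ∣ x i - Γ i) ∧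
        tmap n M x 0 ≠ 0 ∧
        (∀ j : Fin (n+1), 2 ≤ j.val →
          a j ≤ R * (tmap n M x j / tmap n M x 0) ∧
            R * (tmap n M x j / tmap n M x 0) ≤ b j) ∧
        (∀ i, |tmap n M x i| ≤ B)) → ∀ i, |tmap n M x i| ≤ s i := by
    intro x hx
    obtain ⟨-, hF, -, ht0, hzoom, hBd⟩ := hx
    have ht0pos : 0 < |tmap n M x 0| := abs_pos.mpr ht0
    have hhigh : ∀ j : Fin (n+1), 2 ≤ j.val →
        |tmap n M x j| ≤ c1 * |tmap n M x 0| / R := by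
      intro j hj
      obtain ⟨hja, hjb⟩ := hzoom j hj
      have habs : |R * (tmap n M x j / tmap n M x 0)| ≤ c1 := by
        rw [abs_le]
        constructor
        · have := (hc1ab j).1
          have := neg_abs_le (a j)
          linarith
        · have := (hc1ab j).2
          have := le_abs_self (b j)
          linarith
      rw [abs_mul, abs_div, abs_of_pos hRpos] at habs
      rw [le_div_iff₀ hRpos]
      calc |tmap n M x j| * R
          = (R * (|tmap n M x j| / |tmap n M x 0|)) * |tmap n M x 0| := by
            field_simp
        _ ≤ c1 * |tmap n M x 0| := mul_le_mul_of_nonneg_right habs (abs_nonneg _)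
    have hFR : FR N (fun k => ((x k : ℝ))) = 0 := by
      have hev := even_quadsum N hNsym hNeven x
      have hz : (∑ i, ∑ j, N i j * x i * x j) = 0 := by
        have h2 := Int.two_mul_ediv_two_of_even hev
        have hF' : (∑ i, ∑ j, N i j * x i * x j) / 2 = 0 := hF
        omega
      rw [FR]
      have he : (∑ i, ∑ j, ((N i j : ℝ)) * (x i : ℝ) * (x j : ℝ))
          = ((∑ i, ∑ j, N i j * x i * x j : ℤ) : ℝ) := by push_cast; ring
      rw [he, hz]
      simp
    have hinv : M⁻¹.mulVec (tmap n M x) = fun k => ((x k : ℝ)) := by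
      rw [tmap, Matrix.mulVec_mulVec, Matrix.nonsing_inv_mul M hMdet, Matrix.one_mulVec]
    have hW := hWitt (tmap n M x)
    rw [hinv, hFR] at hW
    have ht1 : |tmap n M x 1| ≤ c2 * |tmap n M x 0| / R^2 := by
      obtain ⟨q, hqdef⟩ : ∃ c : ℝ, c = c1 * |tmap n M x 0| / R := ⟨_, rfl⟩
      have hqnn : 0 ≤ q := by
        rw [hqdef]
        exact div_nonneg (mul_nonneg (by linarith) (abs_nonneg _)) hRpos.le
      have hQ : |QFR G (fun i => tmap n M x (emb i))| ≤ cG * q^2 := by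
        rw [QFR]
        calc |∑ i, ∑ j, G i j * tmap n M x (emb i) * tmap n M x (emb j)|
            ≤ ∑ i, ∑ j, |G i j * tmap n M x (emb i) * tmap n M x (emb j)| := by
              refine (Finset.abs_sum_le_sum_abs _ _).trans ?_
              refine Finset.sum_le_sum fun i _ => Finset.abs_sum_le_sum_abs _ _
          _ ≤ ∑ i, ∑ j, |G i j| * q^2 := by
              refine Finset.sum_le_sum fun i _ => Finset.sum_le_sum fun j _ => ?_
              rw [abs_mul, abs_mul]
              have hi : |tmap n M x (emb i)| ≤ q := by
                rw [hqdef]; exact hhigh (emb i) (by simp [emb])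
              have hj : |tmap n M x (emb j)| ≤ q := by
                rw [hqdef]; exact hhigh (emb j) (by simp [emb])
              nlinarith [mul_le_mul hi hj (abs_nonneg (tmap n M x (emb j))) hqnn,
                abs_nonneg (G i j), abs_nonneg (tmap n M x (emb i)),
                abs_nonneg (tmap n M x (emb j))]
          _ = (∑ i, ∑ j, |G i j|) * q^2 := by
              rw [Finset.sum_mul]
              exact Finset.sum_congr rfl fun i _ => (Finset.sum_mul _ _ _).symm
          _ ≤ cG * q^2 := by
              have hle : (∑ i, ∑ j, |G i j|) ≤ cG := by rw [hcGdef]; linarith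
              exact mul_le_mul_of_nonneg_right hle (sq_nonneg q)
      have hprod : |tmap n M x 0| * |tmap n M x 1| ≤ cG * q^2 := by
        rw [← abs_mul]
        have he : tmap n M x 0 * tmap n M x 1
            = -QFR G (fun i => tmap n M x (emb i)) := by linarith [hW]
        rw [he, abs_neg]
        exact hQ
      have hq2 : cG * q^2 = c2 * |tmap n M x 0| / R^2 * |tmap n M x 0| := by
        rw [hqdef, hc2def]
        field_simp
      rw [hq2] at hprod
      have hne : |tmap n M x 0| ≠ 0 := ne_of_gt ht0pos
      have hRne : R ≠ 0 := ne_of_gt hRpos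
      calc |tmap n M x 1| = |tmap n M x 0| * |tmap n M x 1| / |tmap n M x 0| := by
            field_simp
        _ ≤ (c2 * |tmap n M x 0| / R^2 * |tmap n M x 0|) / |tmap n M x 0| :=
            div_le_div_of_nonneg_right hprod ht0pos.le
        _ = c2 * |tmap n M x 0| / R^2 := by field_simp
    intro i
    by_cases hi0 : i = 0
    · rw [hi0, hs0]; exact hBd 0
    by_cases hi1 : i = 1
    · rw [hi1, hs1]
      refine ht1.trans ?_
      have h1 : c2 * |tmap n M x 0| ≤ c2 * B :=
        mul_le_mul_of_nonneg_left (hBd 0) (by linarith)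
      exact div_le_div_of_nonneg_right h1 (pow_pos hRpos 2).le
    · rw [hsoth i hi0 hi1]
      have hival : 2 ≤ i.val := by
        have h0 : i.val ≠ 0 := fun h => hi0 (Fin.ext h)
        have h1 : i.val ≠ 1 := by
          intro h
          apply hi1
          apply Fin.ext
          rw [h, Fin.val_one', Nat.mod_eq_of_lt (by omega)]
        omega
      refine (hhigh i hival).trans ?_
      have h1 : c1 * |tmap n M x 0| ≤ c1 * B :=
        mul_le_mul_of_nonneg_left (hBd 0) (by linarith)
      exact div_le_div_of_nonneg_right h1 hRpos.le
  -- inverse map identity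
  have hinvM : ∀ z : Fin (n+1) → ℤ, M⁻¹.mulVec (tmap n M z) = fun k => ((z k : ℝ)) := by
    intro z
    rw [tmap, Matrix.mulVec_mulVec, Matrix.nonsing_inv_mul M hMdet, Matrix.one_mulVec]
  obtain ⟨Box, hBoxdef⟩ : ∃ bx : Fin (n+1) → Finset ℤ,
      bx = fun i => Finset.Icc (-(⌈s i / d⌉)) ⌈s i / d⌉ := ⟨_, rfl⟩
  -- injection into the product of boxes
  have hcount : (NW n N M a b B R L Γ : ℝ) ≤ ∏ i, ((Box i).card : ℝ) := by
    rw [NW]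
    have hmem : ∀ (x : {x : Fin (n+1) → ℤ //
        x ≠ 0 ∧ Fint N x = 0 ∧ (∀ i, (L : ℤ) ∣ x i - Γ i) ∧
        tmap n M x 0 ≠ 0 ∧
        (∀ j : Fin (n+1), 2 ≤ j.val →
          a j ≤ R * (tmap n M x j / tmap n M x 0) ∧
            R * (tmap n M x j / tmap n M x 0) ≤ b j) ∧
        (∀ i, |tmap n M x i| ≤ B)}) (i : Fin (n+1)),
        ⌊tmap n M x.1 i / d⌋ ∈ Box i := by
      intro x i
      have hbd := key x.1 x.2 i
      simp only [hBoxdef]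
      rw [Finset.mem_Icc]
      have hup : tmap n M x.1 i / d ≤ s i / d := by
        have h1 : tmap n M x.1 i ≤ s i := (le_abs_self _).trans hbd
        exact div_le_div_of_nonneg_right h1 hdpos.le
      have hlo : -(s i) / d ≤ tmap n M x.1 i / d := by
        have h1 : -(s i) ≤ tmap n M x.1 i := neg_le_of_abs_le hbd
        exact div_le_div_of_nonneg_right h1 hdpos.le
      rw [neg_div] at hlo
      constructor
      · rw [Int.le_floor]
        push_cast
        have := Int.le_ceil (s i / d)
        linarith
      · exact (Int.floor_le_floor hup).trans (Int.floor_le_ceil _)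
    let f : {x : Fin (n+1) → ℤ //
        x ≠ 0 ∧ Fint N x = 0 ∧ (∀ i, (L : ℤ) ∣ x i - Γ i) ∧
        tmap n M x 0 ≠ 0 ∧
        (∀ j : Fin (n+1), 2 ≤ j.val →
          a j ≤ R * (tmap n M x j / tmap n M x 0) ∧
            R * (tmap n M x j / tmap n M x 0) ≤ b j) ∧
        (∀ i, |tmap n M x i| ≤ B)} → (∀ i, (Box i : Finset ℤ)) :=
      fun x i => ⟨⌊tmap n M x.1 i / d⌋, hmem x i⟩
    have hfinj : Function.Injective f := by
      intro x y hxy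
      have hlt : ∀ j, |tmap n M x.1 j - tmap n M y.1 j| < d := by
        intro j
        have hfl : ⌊tmap n M x.1 j / d⌋ = ⌊tmap n M y.1 j / d⌋ :=
          congrArg Subtype.val (congrFun hxy j)
        have h1 := Int.floor_le (tmap n M x.1 j / d)
        have h2 := Int.lt_floor_add_one (tmap n M x.1 j / d)
        have h3 := Int.floor_le (tmap n M y.1 j / d)
        have h4 := Int.lt_floor_add_one (tmap n M y.1 j / d)
        rw [hfl] at h1 h2
        have hdne : d ≠ 0 := ne_of_gt hdpos
        have e : tmap n M x.1 j - tmap n M y.1 j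
            = (tmap n M x.1 j / d - tmap n M y.1 j / d) * d := by field_simp
        rw [abs_lt]
        constructor <;> nlinarith
      have hxiy : ∀ j, (x.1 j : ℝ) - y.1 j
          = ∑ k, M⁻¹ j k * (tmap n M x.1 k - tmap n M y.1 k) := by
        intro j
        have hx' := congrFun (hinvM x.1) j
        have hy' := congrFun (hinvM y.1) j
        rw [← hx', ← hy']
        simp only [Matrix.mulVec, dotProduct, mul_sub]
        rw [Finset.sum_sub_distrib]
      have hb2 : ∀ j, |(x.1 j : ℝ) - y.1 j| < (L:ℝ) := by
        intro j
        rw [hxiy j]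
        have hc6ne : c6 ≠ 0 := by linarith
        calc |∑ k, M⁻¹ j k * (tmap n M x.1 k - tmap n M y.1 k)|
            ≤ ∑ k, |M⁻¹ j k * (tmap n M x.1 k - tmap n M y.1 k)| :=
              Finset.abs_sum_le_sum_abs _ _
          _ ≤ ∑ k, |M⁻¹ j k| * d := by
              refine Finset.sum_le_sum fun k _ => ?_
              rw [abs_mul]
              exact mul_le_mul_of_nonneg_left (le_of_lt (hlt k)) (abs_nonneg _)
          _ = (∑ k, |M⁻¹ j k|) * d := (Finset.sum_mul _ _ _).symm
          _ ≤ c6 * d := mul_le_mul_of_nonneg_right (hc6row j) hdpos.le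
          _ = (L:ℝ)/2 := by rw [hddef]; field_simp
          _ < (L:ℝ) := by linarith
      apply Subtype.ext
      funext i
      obtain ⟨-, -, hxc, -, -, -⟩ := x.2
      obtain ⟨-, -, hyc, -, -, -⟩ := y.2
      have hdv : (L:ℤ) ∣ x.1 i - y.1 i := by
        have := dvd_sub (hxc i) (hyc i)
        simpa using this
      have habs : |x.1 i - y.1 i| < (L:ℤ) := by
        have h1 : ((|x.1 i - y.1 i| : ℤ) : ℝ) < (L : ℝ) := by
          push_cast
          exact hb2 i
        exact_mod_cast h1
      have := Int.eq_zero_of_abs_lt_dvd hdv habs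
      omega
    have h1 : Nat.card {x : Fin (n+1) → ℤ //
        x ≠ 0 ∧ Fint N x = 0 ∧ (∀ i, (L : ℤ) ∣ x i - Γ i) ∧
        tmap n M x 0 ≠ 0 ∧
        (∀ j : Fin (n+1), 2 ≤ j.val →
          a j ≤ R * (tmap n M x j / tmap n M x 0) ∧
            R * (tmap n M x j / tmap n M x 0) ≤ b j) ∧
        (∀ i, |tmap n M x i| ≤ B)} ≤ ∏ i, (Box i).card := by
      refine (Nat.card_le_card_of_injective f hfinj).trans_eq ?_
      rw [Nat.card_pi]
      exact Finset.prod_congr rfl fun i _ => by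
        simp [Nat.card_eq_fintype_card, Fintype.card_coe]
    exact_mod_cast h1
  -- bound on each box cardinality
  have hcard2 : ∀ i, ((Box i).card : ℝ) ≤ 3 * (1 + s i / d) := by
    intro i
    have hnn : (0:ℝ) ≤ s i / d := le_of_lt (div_pos (hspos i) hdpos)
    have hceil0 : 0 ≤ ⌈s i / d⌉ := Int.ceil_nonneg hnn
    have hcardeq : (Box i).card = (2 * ⌈s i / d⌉ + 1).toNat := by
      simp only [hBoxdef]
      rw [Int.card_Icc]
      congr 1
      ring
    rw [hcardeq]
    have h2 : (⌈s i/d⌉ : ℝ) < s i/d + 1 := Int.ceil_lt_add_one _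
    have h3 : ((2 * ⌈s i/d⌉ + 1).toNat : ℤ) = 2 * ⌈s i/d⌉ + 1 :=
      Int.toNat_of_nonneg (by omega)
    have h4 : (((2 * ⌈s i/d⌉ + 1).toNat : ℕ) : ℝ) = 2 * (⌈s i/d⌉:ℝ) + 1 := by
      rw [← Int.cast_natCast (R := ℝ) ((2 * ⌈s i/d⌉ + 1).toNat), h3]
      push_cast
      ring
    rw [h4]
    linarith
  obtain ⟨u, hudef⟩ : ∃ c : ℝ, c = B/(L:ℝ) := ⟨_, rfl⟩
  obtain ⟨v, hvdef⟩ : ∃ c : ℝ, c = B/((L:ℝ)*R) := ⟨_, rfl⟩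
  have hupos : 0 < u := by rw [hudef]; exact div_pos hBpos hLpos
  have hvpos : 0 < v := by rw [hvdef]; exact div_pos hBpos (mul_pos hLpos hRpos)
  -- bound the product
  have hprod : ∏ i, ((Box i).card : ℝ) ≤ (3*(1+K*u)) * (3*(1+K*v))^n := by
    have hfac : ∀ i : Fin (n+1), ((Box i).card:ℝ)
        ≤ (if i = 0 then 3*(1+K*u) else 3*(1+K*v)) := by
      intro i
      refine (hcard2 i).trans ?_
      split_ifs with h
      · have e : s i / d = (2*c6) * B / (L:ℝ) := by
          rw [h, hs0, hddef]; field_simp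
        have h5 : (2*c6) * B / (L:ℝ) ≤ K * B / (L:ℝ) := by
          refine div_le_div_of_nonneg_right ?_ hLpos.le
          have h7 : 2*c6 ≤ K := by rw [hKdef]; nlinarith
          exact mul_le_mul_of_nonneg_right h7 hBpos.le
        have h6 : K * B / (L:ℝ) = K * u := by rw [hudef]; ring
        rw [e]
        linarith
      · by_cases h1 : i = 1
        · have e : s i / d = (2*c6*c2) * B / ((L:ℝ)*R^2) := by
            rw [h1, hs1, hddef]; field_simp
          have h5 : (2*c6*c2) * B / ((L:ℝ)*R^2) ≤ K * B / ((L:ℝ)*R^2) := by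
            refine div_le_div_of_nonneg_right ?_ (by positivity)
            have h7 : 2*c6*c2 ≤ K := by rw [hKdef]; nlinarith
            exact mul_le_mul_of_nonneg_right h7 hBpos.le
          have h5' : K * B / ((L:ℝ)*R^2) ≤ K * B / ((L:ℝ)*R) := by
            refine div_le_div_of_nonneg_left (mul_pos hKpos hBpos).le
              (mul_pos hLpos hRpos) ?_
            have hRR : R ≤ R^2 := by nlinarith [mul_nonneg hRpos.le (sub_nonneg.mpr hR)]
            exact mul_le_mul_of_nonneg_left hRR hLpos.le
          have h6 : K * B / ((L:ℝ)*R) = K * v := by rw [hvdef]; ring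
          rw [e]
          linarith
        · have e : s i / d = (2*c6*c1) * B / ((L:ℝ)*R) := by
            rw [hsoth i h h1, hddef]; field_simp
          have h5 : (2*c6*c1) * B / ((L:ℝ)*R) ≤ K * B / ((L:ℝ)*R) := by
            refine div_le_div_of_nonneg_right ?_ (mul_pos hLpos hRpos).le
            have h7 : 2*c6*c1 ≤ K := by rw [hKdef]; nlinarith
            exact mul_le_mul_of_nonneg_right h7 hBpos.le
          have h6 : K * B / ((L:ℝ)*R) = K * v := by rw [hvdef]; ring
          rw [e]
          linarith
    calc ∏ i, ((Box i).card : ℝ)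
        ≤ ∏ i : Fin (n+1), (if i = 0 then 3*(1+K*u) else 3*(1+K*v)) :=
          Finset.prod_le_prod (fun i _ => Nat.cast_nonneg _) (fun i _ => hfac i)
      _ = (3*(1+K*u)) * (3*(1+K*v))^n := by
          rw [Fin.prod_univ_succ, if_pos rfl]
          congr 1
          rw [Finset.prod_congr rfl fun j (_ : j ∈ Finset.univ) =>
            if_neg (Fin.succ_ne_zero j)]
          simp
  -- final algebra
  obtain ⟨Ssum, hSdef⟩ : ∃ c : ℝ, c = 1 + B^(n+1) / ((L : ℝ)^(n+1) * R^n)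
      + ∑ k ∈ Finset.Icc 1 n, B^k / ((L : ℝ)^k * R^(k-1)) := ⟨_, rfl⟩
  have hSnn : 0 ≤ Ssum := by
    rw [hSdef]
    have h1 : (0:ℝ) ≤ B^(n+1) / ((L : ℝ)^(n+1) * R^n) :=
      div_nonneg (pow_nonneg hBpos.le _)
        (mul_nonneg (pow_nonneg hLpos.le _) (pow_nonneg hRpos.le _))
    have h2 : (0:ℝ) ≤ ∑ k ∈ Finset.Icc 1 n, B^k / ((L : ℝ)^k * R^(k-1)) :=
      Finset.sum_nonneg fun k _ => div_nonneg (pow_nonneg hBpos.le _)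
        (mul_nonneg (pow_nonneg hLpos.le _) (pow_nonneg hRpos.le _))
    linarith
  have hstep1 : (1+K*v)^n ≤ 2^n * (1 + (K*v)^n) := by
    have hKv : 0 < K*v := mul_pos hKpos hvpos
    have h2n : (0:ℝ) < 2^n := by positivity
    have hKvn : 0 ≤ (K*v)^n := pow_nonneg hKv.le n
    rcases le_total (K*v) 1 with h|h
    · have hp : (1+K*v)^n ≤ 2^n :=
        pow_le_pow_left₀ (by linarith) (by linarith) n
      nlinarith
    · have hp : (1+K*v)^n ≤ (2*(K*v))^n :=
        pow_le_pow_left₀ (by linarith) (by linarith) n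
      have he : (2*(K*v))^n = 2^n * (K*v)^n := by rw [mul_pow]
      nlinarith
  have hmid : (1+K*u) * (1 + (K*v)^n) ≤ K^(n+1) * (1 + u + v^n + u*v^n) := by
    have e1 : (1+K*u) * (1+(K*v)^n)
        = 1 + K*u + K^n * v^n + K^(n+1) * (u * v^n) := by ring
    have t1 : 1 ≤ K^(n+1) := one_le_pow₀ hK
    have t2 : K ≤ K^(n+1) := le_self_pow₀ hK (by omega)
    have t3 : K^n ≤ K^(n+1) := pow_le_pow_right₀ hK (by omega)
    have hvn : 0 ≤ v^n := pow_nonneg hvpos.le n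
    have m2 : K * u ≤ K^(n+1) * u := mul_le_mul_of_nonneg_right t2 hupos.le
    have m3 : K^n * v^n ≤ K^(n+1) * v^n := mul_le_mul_of_nonneg_right t3 hvn
    rw [e1]
    linarith
  have hterm1 : u = B^1 / ((L:ℝ)^1 * R^(1-1)) := by
    rw [hudef]; norm_num
  have htermn : v^n ≤ B^n / ((L:ℝ)^n * R^(n-1)) := by
    have e : v^n = B^n / ((L:ℝ)^n * R^n) := by
      rw [hvdef, div_pow, mul_pow]
    rw [e]
    refine div_le_div_of_nonneg_left (pow_nonneg hBpos.le n) ?_ ?_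
    · exact mul_pos (pow_pos hLpos n) (pow_pos hRpos (n-1))
    · have h1 : R^(n-1) ≤ R^n := pow_le_pow_right₀ hR (by omega)
      have h2 : (0:ℝ) < (L:ℝ)^n := pow_pos hLpos n
      exact mul_le_mul_of_nonneg_left h1 h2.le
  have htermuv : u * v^n = B^(n+1) / ((L:ℝ)^(n+1) * R^n) := by
    rw [hudef, hvdef, div_pow, mul_pow]
    field_simp
    ring
  have hsum2 : B^1/((L:ℝ)^1*R^(1-1)) + B^n/((L:ℝ)^n*R^(n-1))
      ≤ ∑ k ∈ Finset.Icc 1 n, B^k / ((L : ℝ)^k * R^(k-1)) := by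
    have hsub : ({1, n} : Finset ℕ) ⊆ Finset.Icc 1 n := by
      intro k hk
      rw [Finset.mem_insert, Finset.mem_singleton] at hk
      rcases hk with rfl|rfl <;> rw [Finset.mem_Icc] <;> omega
    have h := Finset.sum_le_sum_of_subset_of_nonneg
      (f := fun k => B^k / ((L:ℝ)^k * R^(k-1))) hsub
      (fun k _ _ => div_nonneg (pow_nonneg hBpos.le _)
        (mul_nonneg (pow_nonneg hLpos.le _) (pow_nonneg hRpos.le _)))
    rwa [Finset.sum_pair (by omega : (1:ℕ) ≠ n)] at h
  have hS3 : 1 + u + v^n + u*v^n ≤ Ssum := by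
    rw [hSdef, ← htermuv]
    linarith [hsum2, htermn, hterm1.le, hterm1.ge]
  have hPnn : (0:ℝ) ≤ 1 + K*u := by nlinarith [mul_pos hKpos hupos]
  have hKn1 : (0:ℝ) ≤ K^(n+1) := pow_nonneg hKpos.le _
  rw [show (1 : ℝ) + B^(n+1) / ((L : ℝ)^(n+1) * R^n)
      + ∑ k ∈ Finset.Icc 1 n, B^k / ((L : ℝ)^k * R^(k-1)) = Ssum from hSdef.symm]
  calc (NW n N M a b B R L Γ : ℝ)
      ≤ ∏ i, ((Box i).card : ℝ) := hcount
    _ ≤ (3*(1+K*u)) * (3*(1+K*v))^n := hprod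
    _ = 3^(n+1) * ((1+K*u) * (1+K*v)^n) := by rw [mul_pow]; ring
    _ ≤ 3^(n+1) * ((1+K*u) * (2^n * (1 + (K*v)^n))) := by
        have h1 := mul_le_mul_of_nonneg_left hstep1 hPnn
        have h3 : (0:ℝ) ≤ 3^(n+1) := by positivity
        exact mul_le_mul_of_nonneg_left h1 h3
    _ = 3^(n+1) * 2^n * ((1+K*u) * (1 + (K*v)^n)) := by ring
    _ ≤ 3^(n+1) * 2^n * (K^(n+1) * (1 + u + v^n + u*v^n)) := by
        have h3 : (0:ℝ) ≤ 3^(n+1) * 2^n := by positivity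
        exact mul_le_mul_of_nonneg_left hmid h3
    _ ≤ 3^(n+1) * 2^n * (K^(n+1) * Ssum) := by
        have h3 : (0:ℝ) ≤ 3^(n+1) * 2^n := by positivity
        exact mul_le_mul_of_nonneg_left
          (mul_le_mul_of_nonneg_left hS3 hKn1) h3
    _ ≤ 3^(n+1) * 2^(n+1) * (K^(n+1) * Ssum) := by
        have h2n : (2:ℝ)^n ≤ 2^(n+1) := by
          rw [pow_succ]
          have := pow_pos (show (0:ℝ) < 2 by norm_num) n
          linarith
        have hKS : (0:ℝ) ≤ K^(n+1) * Ssum := mul_nonneg hKn1 hSnn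
        have h3 : (0:ℝ) ≤ (3:ℝ)^(n+1) := by positivity
        calc 3^(n+1) * 2^n * (K^(n+1) * Ssum)
            = 2^n * (3^(n+1) * (K^(n+1) * Ssum)) := by ring
          _ ≤ 2^(n+1) * (3^(n+1) * (K^(n+1) * Ssum)) :=
              mul_le_mul_of_nonneg_right h2n
                (mul_nonneg h3 hKS)
          _ = 3^(n+1) * 2^(n+1) * (K^(n+1) * Ssum) := by ring
    _ = 3^(n+1) * 2^(n+1) * K^(n+1) * Ssum := by ring

end Quad
end
end
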